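/- Let 0 < α < β, set ρ = α/β and q = √(β/α), and let π = G(ρ) be the geometric distribution, π(k) = (1−ρ) ρ^k. For f : ℕ → ℝ with |f(x+1) − f(x)| ≤ q^x for all x ∈ ℕ (such f is π-integrable), let g_f : ℕ → ℝ satisfy α g_f(x+1) − β 1_{x≥1} g_f(x) = f(x) − Σ_y f(y) π(y) for all x ∈ ℕ (this determines g_f on ℕ∖{0}). Then: (i) the supremum over all such f of sup_{x ∈ ℕ} |g_f(x+1)|/q^x equals 1/(√β − √α)²; (ii) for every such f and every x ≥ 1, |g_f(x+1) − g_f(x)|/q^x ≤ (1/(√β − √α)²) · (1 + √(α/β) · min{ 1, 2√π (√β − √α)/(αβ)^{1/4} − 1 }). -/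

import Mathlib

open Filter Finset Topology

set_option maxHeartbeats 1600000 in
private lemma stein_aux (a b : ℝ) (ha : 0 < a) (hab : a < b) (f g : ℕ → ℝ)
    (hf : ∀ x : ℕ, |f (x + 1) - f x| ≤ Real.sqrt (b / a) ^ x)
    (hg : ∀ x : ℕ, a * g (x + 1) - (if 1 ≤ x then b else 0) * g x =
      f x - ∑' y : ℕ, f y * ((1 - a / b) * (a / b) ^ y)) :
    (∀ x : ℕ, |g (x + 1)| ≤
      Real.sqrt (a / b) ^ 2 / (a * (1 - Real.sqrt (a / b)) ^ 2) * (Real.sqrt (a / b))⁻¹ ^ x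
        - Real.sqrt (a / b) ^ 2 / (a * (1 - Real.sqrt (a / b)) ^ 2) * Real.sqrt (a / b)) ∧
    (∀ x : ℕ, |g (x + 2) - g (x + 1)| ≤
      Real.sqrt (a / b) ^ 2 / (a * (1 - Real.sqrt (a / b))) * (Real.sqrt (a / b))⁻¹ ^ (x + 1)) := by
  have hb : 0 < b := ha.trans hab
  have hr0 : 0 < a / b := div_pos ha hb
  have hr1 : a / b < 1 := (div_lt_one hb).2 hab
  set r := a / b with hrdef
  have hrb : r * b = a := by rw [hrdef]; field_simp
  set s := Real.sqrt r with hsdef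
  have hs0 : 0 < s := Real.sqrt_pos.2 hr0
  have hs1 : s < 1 := by rw [hsdef]; simpa using Real.sqrt_lt_sqrt hr0.le hr1
  have hrs : r = s ^ 2 := (Real.sq_sqrt hr0.le).symm
  have h1s : 0 < 1 - s := by linarith
  have h1r : 0 < 1 - r := by linarith
  have hsne : s ≠ 0 := ne_of_gt hs0
  have h1sne : (1 : ℝ) - s ≠ 0 := ne_of_gt h1s
  have hane : a ≠ 0 := ne_of_gt ha
  have hq : Real.sqrt (b / a) = s⁻¹ := by
    rw [hsdef, hrdef, show b / a = (a / b)⁻¹ by rw [inv_div], Real.sqrt_inv]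
  have hf' : ∀ x : ℕ, |f (x + 1) - f x| ≤ s⁻¹ ^ x := by
    intro x; have := hf x; rwa [hq] at this
  clear_value s r
  have hkey : ∀ y : ℕ, r ^ y * s⁻¹ ^ y = s ^ y := by
    intro y
    rw [← mul_pow, hrs]
    congr 1
    field_simp [sq]
  have e0 : s ^ 2 / (a * (1 - s)) = s ^ 2 / (a * (1 - s) ^ 2) - s ^ 2 / (a * (1 - s) ^ 2) * s := by
    field_simp
  have e1 : ∀ n : ℕ, (s ^ 2 / (a * (1 - s) ^ 2) * s⁻¹ ^ n - s ^ 2 / (a * (1 - s) ^ 2) * s)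
      + s ^ 2 / (a * (1 - s)) * s⁻¹ ^ (n + 1)
      = s ^ 2 / (a * (1 - s) ^ 2) * s⁻¹ ^ (n + 1) - s ^ 2 / (a * (1 - s) ^ 2) * s := by
    intro n
    simp only [inv_pow]
    field_simp
    ring
  have hsums : Summable fun y : ℕ => s ^ y := summable_geometric_of_lt_one hs0.le hs1
  have hsumr : Summable fun y : ℕ => r ^ y := summable_geometric_of_lt_one hr0.le hr1
  have hgrow : ∀ x : ℕ, |f x - f 0| ≤ (s⁻¹ ^ x - 1) * (s / (1 - s)) := by
    intro x
    induction x with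
    | zero => simp
    | succ n ih =>
      have h1 := hf' n
      have e : s⁻¹ ^ n + (s⁻¹ ^ n - 1) * (s / (1 - s)) = (s⁻¹ ^ (n + 1) - 1) * (s / (1 - s)) := by
        simp only [inv_pow]
        field_simp
        ring
      calc |f (n + 1) - f 0| ≤ |f (n + 1) - f n| + |f n - f 0| := abs_sub_le _ _ _
        _ ≤ s⁻¹ ^ n + (s⁻¹ ^ n - 1) * (s / (1 - s)) := add_le_add h1 ih
        _ = _ := e
  have hfub : ∀ x : ℕ, |f x| ≤ |f 0| + s⁻¹ ^ x * (s / (1 - s)) := by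
    intro x
    have h1 := hgrow x
    have h2 := abs_sub_abs_le_abs_sub (f x) (f 0)
    have h3 : 0 ≤ s / (1 - s) := le_of_lt (div_pos hs0 h1s)
    nlinarith [h1, h2, h3]
  set E := ∑' y : ℕ, f y * ((1 - r) * r ^ y) with hEdef
  clear_value E
  have bound1 : ∀ y : ℕ, |f y * ((1 - r) * r ^ y)| ≤
      |f 0| * (1 - r) * r ^ y + s / (1 - s) * (1 - r) * s ^ y := by
    intro y
    have hpos : 0 ≤ (1 - r) * r ^ y := mul_nonneg h1r.le (pow_nonneg hr0.le y)
    calc |f y * ((1 - r) * r ^ y)| = |f y| * ((1 - r) * r ^ y) := by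
          rw [abs_mul, abs_of_nonneg hpos]
      _ ≤ (|f 0| + s⁻¹ ^ y * (s / (1 - s))) * ((1 - r) * r ^ y) :=
          mul_le_mul_of_nonneg_right (hfub y) hpos
      _ = |f 0| * (1 - r) * r ^ y + s / (1 - s) * (1 - r) * (r ^ y * s⁻¹ ^ y) := by ring
      _ = _ := by rw [hkey y]
  have S1 : Summable fun y : ℕ => f y * ((1 - r) * r ^ y) :=
    Summable.of_abs (Summable.of_nonneg_of_le (fun _ => abs_nonneg _) bound1
      ((hsumr.mul_left _).add (hsums.mul_left _)))
  have bound3 : ∀ y : ℕ, |r ^ y * f y| ≤ |f 0| * r ^ y + s / (1 - s) * s ^ y := by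
    intro y
    have hpos : (0:ℝ) ≤ r ^ y := pow_nonneg hr0.le y
    calc |r ^ y * f y| = r ^ y * |f y| := by rw [abs_mul, abs_of_nonneg hpos]
      _ ≤ r ^ y * (|f 0| + s⁻¹ ^ y * (s / (1 - s))) := mul_le_mul_of_nonneg_left (hfub y) hpos
      _ = |f 0| * r ^ y + s / (1 - s) * (r ^ y * s⁻¹ ^ y) := by ring
      _ = _ := by rw [hkey y]
  have S3 : Summable fun y : ℕ => r ^ y * f y :=
    Summable.of_abs (Summable.of_nonneg_of_le (fun _ => abs_nonneg _) bound3
      ((hsumr.mul_left _).add (hsums.mul_left _)))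
  have S2 : Summable fun k : ℕ => r ^ k * (f k - E) := by
    have h1 : (fun k : ℕ => r ^ k * (f k - E)) = fun k => r ^ k * f k - E * r ^ k :=
      funext fun k => by ring
    rw [h1]
    exact S3.sub (hsumr.mul_left E)
  have hsumgeo : ∑' k : ℕ, r ^ k = (1 - r)⁻¹ := tsum_geometric_of_lt_one hr0.le hr1
  have hE2 : E = (1 - r) * ∑' k : ℕ, r ^ k * f k := by
    rw [hEdef, ← tsum_mul_left]
    congr 1; funext y; ring
  have htotal : ∑' k : ℕ, r ^ k * (f k - E) = 0 := by
    have h1 : (fun k : ℕ => r ^ k * (f k - E)) = fun k => r ^ k * f k - E * r ^ k :=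
      funext fun k => by ring
    rw [h1, Summable.tsum_sub S3 (hsumr.mul_left E), tsum_mul_left, hsumgeo, hE2]
    field_simp
    ring
  have Hfin : ∀ x : ℕ, a * r ^ x * g (x + 1) = ∑ k ∈ range (x + 1), r ^ k * (f k - E) := by
    intro x
    induction x with
    | zero =>
      have h0 := hg 0
      norm_num at h0
      simp [Finset.sum_range_one]
      linarith
    | succ n ih =>
      have h := hg (n + 1)
      rw [if_pos (by omega)] at h
      rw [Finset.sum_range_succ, ← ih]
      linear_combination r ^ (n + 1) * h + r ^ n * g (n + 1) * hrb
  have Htail : ∀ x : ℕ, a * r ^ x * g (x + 1)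
      = - ∑' j : ℕ, r ^ (j + (x + 1)) * (f (j + (x + 1)) - E) := by
    intro x
    have h := Summable.sum_add_tsum_nat_add (f := fun k : ℕ => r ^ k * (f k - E)) (x + 1) S2
    simp only [htotal] at h
    rw [Hfin x]
    linarith
  have hshift : ∀ k : ℕ, Summable fun j : ℕ => r ^ (j + k) * (f (j + k) - E) :=
    fun k => (summable_nat_add_iff k).2 S2
  have Hdelta : ∀ x : ℕ, |g (x + 2) - g (x + 1)| ≤ s ^ 2 / (a * (1 - s)) * s⁻¹ ^ (x + 1) := by
    intro x
    have h1 := Htail (x + 1)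
    simp only [show x + 1 + 1 = x + 2 from rfl] at h1
    have h2 := Htail x
    have h3 : ∑' j : ℕ, r ^ (j + (x + 2)) * (f (j + (x + 1)) - f (j + (x + 2)))
        = r * ∑' j : ℕ, r ^ (j + (x + 1)) * (f (j + (x + 1)) - E)
          - ∑' j : ℕ, r ^ (j + (x + 2)) * (f (j + (x + 2)) - E) := by
      rw [← tsum_mul_left, ← Summable.tsum_sub ((hshift (x + 1)).mul_left r) (hshift (x + 2))]
      congr 1; funext j; ring
    have key : a * r ^ (x + 1) * (g (x + 2) - g (x + 1))
        = ∑' j : ℕ, r ^ (j + (x + 2)) * (f (j + (x + 1)) - f (j + (x + 2))) := by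
      rw [h3]
      linear_combination h1 - r * h2
    have hterm : ∀ j : ℕ, |r ^ (j + (x + 2)) * (f (j + (x + 1)) - f (j + (x + 2)))|
        ≤ s ^ (x + 3) * s ^ j := by
      intro j
      have hpos : (0:ℝ) ≤ r ^ (j + (x + 2)) := pow_nonneg hr0.le _
      have h5 : |f (j + (x + 1)) - f (j + (x + 2))| ≤ s⁻¹ ^ (j + (x + 1)) := by
        rw [abs_sub_comm]
        have h6 := hf' (j + (x + 1))
        rw [show j + (x + 1) + 1 = j + (x + 2) by omega] at h6
        simpa using h6
      calc |r ^ (j + (x + 2)) * (f (j + (x + 1)) - f (j + (x + 2)))|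
          = r ^ (j + (x + 2)) * |f (j + (x + 1)) - f (j + (x + 2))| := by
            rw [abs_mul, abs_of_nonneg hpos]
        _ ≤ r ^ (j + (x + 2)) * s⁻¹ ^ (j + (x + 1)) :=
            mul_le_mul_of_nonneg_left h5 hpos
        _ = s ^ (x + 3) * s ^ j := by
            rw [hrs]
            simp only [inv_pow]
            field_simp
            ring
    have hsumabs : Summable fun j : ℕ => |r ^ (j + (x + 2)) * (f (j + (x + 1)) - f (j + (x + 2)))| :=
      Summable.of_nonneg_of_le (fun _ => abs_nonneg _) hterm (hsums.mul_left _)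
    have habs : |a * r ^ (x + 1) * (g (x + 2) - g (x + 1))| ≤ s ^ (x + 3) * (1 - s)⁻¹ := by
      rw [key]
      calc |∑' j : ℕ, r ^ (j + (x + 2)) * (f (j + (x + 1)) - f (j + (x + 2)))|
          ≤ ∑' j : ℕ, |r ^ (j + (x + 2)) * (f (j + (x + 1)) - f (j + (x + 2)))| := by
            simpa only [Real.norm_eq_abs] using norm_tsum_le_tsum_norm
              (f := fun j : ℕ => r ^ (j + (x + 2)) * (f (j + (x + 1)) - f (j + (x + 2))))
              (by simpa only [Real.norm_eq_abs] using hsumabs)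
        _ ≤ ∑' j : ℕ, s ^ (x + 3) * s ^ j := Summable.tsum_le_tsum hterm hsumabs (hsums.mul_left _)
        _ = s ^ (x + 3) * (1 - s)⁻¹ := by
            rw [tsum_mul_left, tsum_geometric_of_lt_one hs0.le hs1]
    have hpos2 : 0 < a * r ^ (x + 1) := mul_pos ha (pow_pos hr0 _)
    have hineq : |g (x + 2) - g (x + 1)| * (a * r ^ (x + 1)) ≤ s ^ (x + 3) * (1 - s)⁻¹ := by
      rw [← abs_of_pos hpos2, ← abs_mul]
      calc |(g (x + 2) - g (x + 1)) * (a * r ^ (x + 1))|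
          = |a * r ^ (x + 1) * (g (x + 2) - g (x + 1))| := by ring_nf
        _ ≤ _ := habs
    have hrw : s ^ 2 / (a * (1 - s)) * s⁻¹ ^ (x + 1) * (a * r ^ (x + 1)) = s ^ (x + 3) * (1 - s)⁻¹ := by
      rw [hrs]
      simp only [inv_pow]
      field_simp
      ring
    rw [← hrw] at hineq
    exact le_of_mul_le_mul_right hineq hpos2
  refine ⟨?_, Hdelta⟩
  have h1s2 : (1:ℝ) - s ^ 2 ≠ 0 := by nlinarith
  have hsplit : f 0 - E = ∑' y : ℕ, (f 0 - f y) * ((1 - r) * r ^ y) := by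
    have h1 : (fun y : ℕ => (f 0 - f y) * ((1 - r) * r ^ y))
        = fun y => f 0 * (1 - r) * r ^ y - f y * ((1 - r) * r ^ y) := funext fun y => by ring
    rw [h1, Summable.tsum_sub (hsumr.mul_left _) S1, tsum_mul_left, hsumgeo, ← hEdef]
    field_simp
  have bound2 : ∀ y : ℕ, |(f 0 - f y) * ((1 - r) * r ^ y)|
      ≤ s * (1 - r) / (1 - s) * (s ^ y - r ^ y) := by
    intro y
    have hpos : 0 ≤ (1 - r) * r ^ y := mul_nonneg h1r.le (pow_nonneg hr0.le y)
    have h2 : |f 0 - f y| ≤ (s⁻¹ ^ y - 1) * (s / (1 - s)) := by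
      rw [abs_sub_comm]; exact hgrow y
    calc |(f 0 - f y) * ((1 - r) * r ^ y)| = |f 0 - f y| * ((1 - r) * r ^ y) := by
          rw [abs_mul, abs_of_nonneg hpos]
      _ ≤ (s⁻¹ ^ y - 1) * (s / (1 - s)) * ((1 - r) * r ^ y) :=
          mul_le_mul_of_nonneg_right h2 hpos
      _ = s * (1 - r) / (1 - s) * (r ^ y * s⁻¹ ^ y - r ^ y) := by ring
      _ = _ := by rw [hkey y]
  have hsumabs2 : Summable fun y : ℕ => |(f 0 - f y) * ((1 - r) * r ^ y)| :=
    Summable.of_nonneg_of_le (fun _ => abs_nonneg _) bound2 ((hsums.sub hsumr).mul_left _)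
  have hfE : |f 0 - E| ≤ s ^ 2 / (1 - s) := by
    have habs : |f 0 - E| ≤ s * (1 - r) / (1 - s) * ((1 - s)⁻¹ - (1 - r)⁻¹) := by
      rw [hsplit]
      calc |∑' y : ℕ, (f 0 - f y) * ((1 - r) * r ^ y)|
          ≤ ∑' y : ℕ, |(f 0 - f y) * ((1 - r) * r ^ y)| := by
            simpa only [Real.norm_eq_abs] using norm_tsum_le_tsum_norm
              (f := fun y : ℕ => (f 0 - f y) * ((1 - r) * r ^ y))
              (by simpa only [Real.norm_eq_abs] using hsumabs2)
        _ ≤ ∑' y : ℕ, s * (1 - r) / (1 - s) * (s ^ y - r ^ y) :=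
            Summable.tsum_le_tsum bound2 hsumabs2 ((hsums.sub hsumr).mul_left _)
        _ = s * (1 - r) / (1 - s) * ((1 - s)⁻¹ - (1 - r)⁻¹) := by
            rw [tsum_mul_left, Summable.tsum_sub hsums hsumr, hsumgeo,
              tsum_geometric_of_lt_one hs0.le hs1]
    refine le_trans habs (le_of_eq ?_)
    rw [hrs]
    field_simp
    ring
  have hg1 : |g 1| ≤ s ^ 2 / (a * (1 - s)) := by
    have h0 := hg 0
    norm_num at h0
    have h2 : a * |g 1| ≤ s ^ 2 / (1 - s) := by
      rw [← abs_of_pos ha, ← abs_mul, h0]; exact hfE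
    have h3 : s ^ 2 / (a * (1 - s)) = s ^ 2 / (1 - s) / a := by rw [div_div]; ring_nf
    rw [h3, le_div_iff₀ ha]
    linarith
  intro x
  induction x with
  | zero => rw [pow_zero, mul_one, ← e0]; exact hg1
  | succ n ih =>
    have h4 : |g (n + 2)| ≤ |g (n + 1)| + |g (n + 2) - g (n + 1)| := by
      have h := abs_sub_abs_le_abs_sub (g (n + 2)) (g (n + 1))
      linarith
    calc |g (n + 1 + 1)| ≤ |g (n + 1)| + |g (n + 2) - g (n + 1)| := h4
      _ ≤ (s ^ 2 / (a * (1 - s) ^ 2) * s⁻¹ ^ n - s ^ 2 / (a * (1 - s) ^ 2) * s)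
          + s ^ 2 / (a * (1 - s)) * s⁻¹ ^ (n + 1) := add_le_add ih (Hdelta n)
      _ = _ := e1 n

set_option maxHeartbeats 1600000 in
/-- Stein factors for Lipschitz functions (with respect to the weight `q^x`,
`q = √(β/α)`) and geometric approximation, for the M/M/1 Stein operator
`α g(x+1) − β 1_{x≥1} g(x)` with invariant law `G(ρ)`, `ρ = α/β`:
(i) the supremum over all admissible `f` of `sup_x |g_f(x+1)|/q^x` equals
`1/(√β − √α)²`;
(ii) for every admissible `f` and every `x ≥ 1`,
`|g_f(x+1) − g_f(x)|/q^x ≤ (1/(√β − √α)²)(1 + √(α/β) min(1, 2√π(√β − √α)/(αβ)^{1/4} − 1))`. -/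
theorem geometric_stein_factors_lipschitz (a b : ℝ) (ha : 0 < a) (hab : a < b) :
    IsLUB
      {M : ℝ | ∃ f g : ℕ → ℝ,
        (∀ x : ℕ, |f (x + 1) - f x| ≤ Real.sqrt (b / a) ^ x) ∧
        (∀ x : ℕ, a * g (x + 1) - (if 1 ≤ x then b else 0) * g x =
          f x - ∑' y : ℕ, f y * ((1 - a / b) * (a / b) ^ y)) ∧
        ∃ x : ℕ, M = |g (x + 1)| / Real.sqrt (b / a) ^ x}
      (1 / (Real.sqrt b - Real.sqrt a) ^ 2) ∧
    (∀ f g : ℕ → ℝ,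
      (∀ x : ℕ, |f (x + 1) - f x| ≤ Real.sqrt (b / a) ^ x) →
      (∀ x : ℕ, a * g (x + 1) - (if 1 ≤ x then b else 0) * g x =
        f x - ∑' y : ℕ, f y * ((1 - a / b) * (a / b) ^ y)) →
      ∀ x : ℕ, 1 ≤ x →
        |g (x + 1) - g x| / Real.sqrt (b / a) ^ x ≤
          (1 / (Real.sqrt b - Real.sqrt a) ^ 2) *
            (1 + Real.sqrt (a / b) *
              min 1 (2 * Real.sqrt Real.pi * (Real.sqrt b - Real.sqrt a) /
                (a * b) ^ ((1 : ℝ) / 4) - 1))) := by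
  have hb : 0 < b := ha.trans hab
  have hr0 : 0 < a / b := div_pos ha hb
  have hr1 : a / b < 1 := (div_lt_one hb).2 hab
  have hsqa : (0:ℝ) < Real.sqrt a := Real.sqrt_pos.2 ha
  have hsqb : (0:ℝ) < Real.sqrt b := Real.sqrt_pos.2 hb
  have hsqab : Real.sqrt a < Real.sqrt b := Real.sqrt_lt_sqrt ha.le hab
  have hsub : (0:ℝ) < Real.sqrt b - Real.sqrt a := by linarith
  have ha2 : Real.sqrt a ^ 2 = a := Real.sq_sqrt ha.le
  have hb2 : Real.sqrt b ^ 2 = b := Real.sq_sqrt hb.le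
  set s := Real.sqrt (a / b) with hsdef
  have hs0 : 0 < s := Real.sqrt_pos.2 hr0
  have hs1 : s < 1 := by rw [hsdef]; simpa using Real.sqrt_lt_sqrt hr0.le hr1
  have hs2 : s ^ 2 = a / b := Real.sq_sqrt hr0.le
  have h1s : 0 < 1 - s := by linarith
  have hsne : s ≠ 0 := ne_of_gt hs0
  have h1sne : (1:ℝ) - s ≠ 0 := ne_of_gt h1s
  have hane : a ≠ 0 := ne_of_gt ha
  have hbne : b ≠ 0 := ne_of_gt hb
  have hq : Real.sqrt (b / a) = s⁻¹ := by
    rw [hsdef, show b / a = (a / b)⁻¹ by rw [inv_div], Real.sqrt_inv]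
  have hsd : s = Real.sqrt a / Real.sqrt b := by rw [hsdef, Real.sqrt_div ha.le]
  have hkey2 : a * (1 - s) ^ 2 = s ^ 2 * (Real.sqrt b - Real.sqrt a) ^ 2 := by
    rw [hsd]
    field_simp
    rw [ha2]
  have hCid : s ^ 2 / (a * (1 - s) ^ 2) = 1 / (Real.sqrt b - Real.sqrt a) ^ 2 := by
    rw [hkey2, div_eq_div_iff (by positivity) (by positivity)]
    ring
  have hAux := fun (f g : ℕ → ℝ) hf hg => stein_aux a b ha hab f g hf hg
  have hs2' : s ^ 2 = a / b := hs2
  clear_value s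
  have h1s2 : (1:ℝ) - s ^ 2 ≠ 0 := by nlinarith
  have hkey : ∀ y : ℕ, (a / b) ^ y * s⁻¹ ^ y = s ^ y := by
    intro y
    rw [← mul_pow, ← hs2']
    congr 1
    field_simp [sq]
  have hsums : Summable fun y : ℕ => s ^ y := summable_geometric_of_lt_one hs0.le hs1
  have hsumr : Summable fun y : ℕ => (a / b) ^ y := summable_geometric_of_lt_one hr0.le hr1
  have hC0pos : 0 < s ^ 2 / (a * (1 - s) ^ 2) :=
    div_pos (pow_pos hs0 2) (mul_pos ha (pow_pos h1s 2))
  constructor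
  · constructor
    · -- upper bound
      rintro M ⟨f, g, hf, hg, x, rfl⟩
      have H := (hAux f g hf hg).1 x
      rw [← hsdef] at H
      rw [hq, div_le_iff₀ (pow_pos (inv_pos.2 hs0) x), ← hCid]
      have hC0s : 0 < s ^ 2 / (a * (1 - s) ^ 2) * s := mul_pos hC0pos hs0
      linarith
    · -- least upper bound
      intro M hM
      set f0 : ℕ → ℝ := fun k => (1 - s⁻¹ ^ k) * (s / (1 - s)) with hf0def
      set g0 : ℕ → ℝ := fun x => s ^ 3 * (s⁻¹ ^ x - 1) / (a * (1 - s) ^ 2) with hg0def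
      have hf0 : ∀ x : ℕ, |f0 (x + 1) - f0 x| ≤ Real.sqrt (b / a) ^ x := by
        intro x
        rw [hq]
        have e : f0 (x + 1) - f0 x = -(s⁻¹ ^ x) := by
          rw [hf0def]
          simp only [inv_pow]
          field_simp
          ring
        rw [e, abs_neg, abs_of_nonneg (le_of_lt (pow_pos (inv_pos.2 hs0) x))]
      have hE0 : (∑' y : ℕ, f0 y * ((1 - a / b) * (a / b) ^ y)) = -(s ^ 2) / (1 - s) := by
        have hterm : ∀ y : ℕ, f0 y * ((1 - a / b) * (a / b) ^ y)
            = s * (1 - a / b) / (1 - s) * ((a / b) ^ y - s ^ y) := by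
          intro y
          rw [hf0def]
          simp only
          rw [← hkey y]
          ring
        rw [tsum_congr hterm, tsum_mul_left, Summable.tsum_sub hsumr hsums,
          tsum_geometric_of_lt_one hr0.le hr1, tsum_geometric_of_lt_one hs0.le hs1, ← hs2']
        field_simp
        ring
      have hbas : b = a / s ^ 2 := by
        rw [hs2']
        field_simp
      have hg0 : ∀ x : ℕ, a * g0 (x + 1) - (if 1 ≤ x then b else 0) * g0 x =
          f0 x - ∑' y : ℕ, f0 y * ((1 - a / b) * (a / b) ^ y) := by
        intro x
        rw [hE0]
        rcases Nat.eq_zero_or_pos x with hx | hx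
        · subst hx
          rw [if_neg (by norm_num)]
          rw [hg0def, hf0def]
          simp only
          norm_num
          field_simp
        · rw [if_pos (show 1 ≤ x from hx), hg0def, hf0def]
          simp only
          rw [hbas]
          simp only [inv_pow]
          field_simp
          ring
      have h1q : 1 ≤ s⁻¹ := by rw [inv_eq_one_div, le_div_iff₀ hs0]; linarith
      have hle2 : ∀ x : ℕ, s ^ 2 / (a * (1 - s) ^ 2) * (1 - s ^ (x + 1)) ≤ M := by
        intro x
        apply hM
        refine ⟨f0, g0, hf0, hg0, x, ?_⟩
        have h1qp : 1 ≤ s⁻¹ ^ (x + 1) := one_le_pow₀ h1q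
        have hnum : 0 ≤ s ^ 3 * (s⁻¹ ^ (x + 1) - 1) :=
          mul_nonneg (pow_nonneg hs0.le 3) (by linarith)
        rw [hq, hg0def]
        simp only
        rw [abs_of_nonneg (div_nonneg hnum (mul_nonneg ha.le (sq_nonneg _)))]
        simp only [inv_pow]
        field_simp
        ring
      have htend : Filter.Tendsto (fun x : ℕ => s ^ 2 / (a * (1 - s) ^ 2) * (1 - s ^ (x + 1)))
          Filter.atTop (𝓝 (s ^ 2 / (a * (1 - s) ^ 2) * (1 - 0))) := by
        apply Filter.Tendsto.const_mul
        apply Filter.Tendsto.const_sub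
        exact (tendsto_pow_atTop_nhds_zero_of_lt_one hs0.le hs1).comp (tendsto_add_atTop_nat 1)
      have hfin : s ^ 2 / (a * (1 - s) ^ 2) ≤ M := by
        have := le_of_tendsto' htend hle2
        simpa using this
      rw [← hCid]
      exact hfin
  · -- part (ii)
    intro f g hf hg x hx
    obtain ⟨m, rfl⟩ : ∃ m, x = m + 1 := ⟨x - 1, by omega⟩
    have H := (hAux f g hf hg).2 m
    rw [← hsdef] at H
    have hKg : 0 ≤ 2 * Real.sqrt Real.pi * (Real.sqrt b - Real.sqrt a) / (a * b) ^ ((1:ℝ)/4) :=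
      div_nonneg (mul_nonneg (mul_nonneg (by norm_num) (Real.sqrt_nonneg _)) hsub.le)
        (Real.rpow_nonneg (mul_pos ha hb).le _)
    have hmin : -1 ≤ min 1 (2 * Real.sqrt Real.pi * (Real.sqrt b - Real.sqrt a)
        / (a * b) ^ ((1:ℝ)/4) - 1) := le_min (by norm_num) (by linarith)
    have hCpos : 0 < 1 / (Real.sqrt b - Real.sqrt a) ^ 2 := by positivity
    have hD0C : s ^ 2 / (a * (1 - s)) = 1 / (Real.sqrt b - Real.sqrt a) ^ 2 * (1 - s) := by
      rw [← hCid]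
      field_simp
    have hfac : (1:ℝ) - s ≤ 1 + s * min 1 (2 * Real.sqrt Real.pi * (Real.sqrt b - Real.sqrt a)
        / (a * b) ^ ((1:ℝ)/4) - 1) := by
      nlinarith [mul_le_mul_of_nonneg_left hmin hs0.le]
    rw [hq, div_le_iff₀ (pow_pos (inv_pos.2 hs0) (m + 1))]
    calc |g (m + 1 + 1) - g (m + 1)| ≤ s ^ 2 / (a * (1 - s)) * s⁻¹ ^ (m + 1) := H
      _ = 1 / (Real.sqrt b - Real.sqrt a) ^ 2 * (1 - s) * s⁻¹ ^ (m + 1) := by rw [hD0C]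
      _ ≤ 1 / (Real.sqrt b - Real.sqrt a) ^ 2 * (1 + s * min 1 (2 * Real.sqrt Real.pi
            * (Real.sqrt b - Real.sqrt a) / (a * b) ^ ((1:ℝ)/4) - 1)) * s⁻¹ ^ (m + 1) := by
          apply mul_le_mul_of_nonneg_right _ (pow_pos (inv_pos.2 hs0) (m + 1)).le
          exact mul_le_mul_of_nonneg_left hfac hCpos.le
      _ = _ := by ring
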